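/- For every integer k ≥ 1 and every real p with 1/2 ≤ p < 1 and q = 1 − p, Σ_{i=0}^{k} (4·(k−i)+1)·(choose (4·k) i)·p^i·q^(4·k−i) < 5.72. -/

import Mathlib

private lemma aux_three_mul (k i : ℕ) (h : i < k) :
    3 * Nat.choose (4 * k) i ≤ Nat.choose (4 * k) (i + 1) := by
  have key := Nat.choose_succ_right_eq (4 * k) i
  have hle : 3 * (i + 1) ≤ 4 * k - i := by omega
  have h1 : 3 * Nat.choose (4 * k) i * (i + 1) ≤ Nat.choose (4 * k) (i + 1) * (i + 1) := by
    calc 3 * Nat.choose (4 * k) i * (i + 1) = Nat.choose (4 * k) i * (3 * (i + 1)) := by ring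
      _ ≤ Nat.choose (4 * k) i * (4 * k - i) := Nat.mul_le_mul_left _ hle
      _ = Nat.choose (4 * k) (i + 1) * (i + 1) := key.symm
  exact Nat.le_of_mul_le_mul_right h1 (Nat.succ_pos i)

private lemma aux_pow_choose (k : ℕ) : ∀ j ≤ k,
    3 ^ j * Nat.choose (4 * k) (k - j) ≤ Nat.choose (4 * k) k := by
  intro j
  induction j with
  | zero => intro _; simp
  | succ j ih =>
    intro hj
    have hj' : j ≤ k := by omega
    have h1 : k - (j + 1) + 1 = k - j := by omega
    have h2 : k - (j + 1) < k := by omega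
    calc 3 ^ (j + 1) * Nat.choose (4 * k) (k - (j + 1))
        = 3 ^ j * (3 * Nat.choose (4 * k) (k - (j + 1))) := by ring
      _ ≤ 3 ^ j * Nat.choose (4 * k) (k - j) := by
          have := aux_three_mul k (k - (j + 1)) h2
          rw [h1] at this
          exact Nat.mul_le_mul_left _ this
      _ ≤ Nat.choose (4 * k) k := ih hj'

private lemma aux_choose_le (n i : ℕ) (hi : i ≤ n) : Nat.choose n i ≤ 2 ^ n := by
  rw [← Nat.sum_range_choose n]
  exact Finset.single_le_sum (fun j _ => Nat.zero_le _) (Finset.mem_range.mpr (by omega))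

private lemma aux_geom (k : ℕ) :
    ∑ j ∈ Finset.range (k + 1), ((4 * j + 1 : ℕ) : ℝ) * (1 / 3) ^ j
      = 9 / 2 - (4 * k + 7) / (2 * 3 ^ k) := by
  induction k with
  | zero => norm_num
  | succ k ih =>
    rw [Finset.sum_range_succ, ih]
    have h3 : (3 : ℝ) ^ k ≠ 0 := by positivity
    push_cast
    simp only [one_div, inv_pow]
    field_simp
    ring

/-- the ramp-weighted binomial sum `a[k]` (with s = 4) is below 5.72. -/
theorem dave_a_bound
    (k : ℕ) (hk : 1 ≤ k) (p q : ℝ) (hp : 1 / 2 ≤ p) (hp1 : p < 1) (hq : q = 1 - p) :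
    ∑ i ∈ Finset.range (k + 1),
        (4 * ((k : ℝ) - (i : ℝ)) + 1) * (Nat.choose (4 * k) i : ℝ)
          * p ^ i * q ^ (4 * k - i)
      < 5.72 := by
  have hq0 : 0 < q := by rw [hq]; linarith
  have hp0 : 0 < p := by linarith
  have hpq : p * q ≤ 1 / 4 := by nlinarith [hq]
  have hq2 : q ≤ 1 / 2 := by rw [hq]; linarith
  have key : ∀ i ∈ Finset.range (k + 1),
      (4 * ((k : ℝ) - (i : ℝ)) + 1) * (Nat.choose (4 * k) i : ℝ) * p ^ i * q ^ (4 * k - i)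
        ≤ ((4 * (k - i) + 1 : ℕ) : ℝ) * (1 / 3) ^ (k - i) := by
    intro i hi
    have hik : i ≤ k := by
      have := Finset.mem_range.mp hi; omega
    -- bound on p^i q^(4k-i)
    have hsplit : 4 * k - i = i + (4 * k - 2 * i) := by omega
    have hpow : p ^ i * q ^ (4 * k - i) ≤ (1 / 2 : ℝ) ^ (4 * k) := by
      rw [hsplit, pow_add, ← mul_assoc, ← mul_pow]
      have h1 : (p * q) ^ i ≤ (1 / 4 : ℝ) ^ i :=
        pow_le_pow_left₀ (by positivity) hpq i
      have h2 : q ^ (4 * k - 2 * i) ≤ (1 / 2 : ℝ) ^ (4 * k - 2 * i) :=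
        pow_le_pow_left₀ (le_of_lt hq0) hq2 _
      calc (p * q) ^ i * q ^ (4 * k - 2 * i)
          ≤ (1 / 4 : ℝ) ^ i * (1 / 2) ^ (4 * k - 2 * i) := by
            exact mul_le_mul h1 h2 (by positivity) (by positivity)
        _ = (1 / 2 : ℝ) ^ (4 * k) := by
            rw [show ((1:ℝ)/4) = (1/2)^2 by norm_num, ← pow_mul, ← pow_add]
            congr 1
            omega
    -- bound on choose
    have hch : (Nat.choose (4 * k) i : ℝ) ≤ (2 : ℝ) ^ (4 * k) * (1 / 3) ^ (k - i) := by
      have h1 := aux_pow_choose k (k - i) (Nat.sub_le k i)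
      rw [show k - (k - i) = i by omega] at h1
      have h2 : Nat.choose (4 * k) k ≤ 2 ^ (4 * k) := aux_choose_le _ _ (by omega)
      have h3 : (3 : ℝ) ^ (k - i) * (Nat.choose (4 * k) i : ℝ) ≤ (2 : ℝ) ^ (4 * k) := by
        calc (3 : ℝ) ^ (k - i) * (Nat.choose (4 * k) i : ℝ)
            = ((3 ^ (k - i) * Nat.choose (4 * k) i : ℕ) : ℝ) := by push_cast; ring
          _ ≤ ((2 ^ (4 * k) : ℕ) : ℝ) := by exact_mod_cast le_trans h1 h2
          _ = (2 : ℝ) ^ (4 * k) := by push_cast; ring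
      have h4 : (0 : ℝ) < 3 ^ (k - i) := by positivity
      rw [show ((1:ℝ)/3) ^ (k - i) = ((3:ℝ) ^ (k - i))⁻¹ by rw [one_div, inv_pow]]
      rw [← div_eq_mul_inv, le_div_iff₀ h4]
      linarith [h3]
    have hw : (4 * ((k : ℝ) - (i : ℝ)) + 1) = ((4 * (k - i) + 1 : ℕ) : ℝ) := by
      push_cast [Nat.cast_sub hik]
      ring
    rw [hw]
    have hwpos : (0 : ℝ) ≤ ((4 * (k - i) + 1 : ℕ) : ℝ) := by positivity
    have hcm : (Nat.choose (4 * k) i : ℝ) * (p ^ i * q ^ (4 * k - i))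
        ≤ ((2 : ℝ) ^ (4 * k) * (1 / 3) ^ (k - i)) * ((1 / 2 : ℝ) ^ (4 * k)) :=
      mul_le_mul hch hpow (by positivity) (by positivity)
    have hone : ((2 : ℝ) ^ (4 * k) * (1 / 3) ^ (k - i)) * ((1 / 2 : ℝ) ^ (4 * k))
        = (1 / 3) ^ (k - i) := by
      rw [one_div, inv_pow]
      field_simp
      ring
      rw [← mul_pow]; norm_num
    calc ((4 * (k - i) + 1 : ℕ) : ℝ) * (Nat.choose (4 * k) i : ℝ) * p ^ i * q ^ (4 * k - i)
        = ((4 * (k - i) + 1 : ℕ) : ℝ)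
            * ((Nat.choose (4 * k) i : ℝ) * (p ^ i * q ^ (4 * k - i))) := by ring
      _ ≤ ((4 * (k - i) + 1 : ℕ) : ℝ)
            * (((2 : ℝ) ^ (4 * k) * (1 / 3) ^ (k - i)) * ((1 / 2 : ℝ) ^ (4 * k))) :=
          mul_le_mul_of_nonneg_left hcm hwpos
      _ = ((4 * (k - i) + 1 : ℕ) : ℝ) * (1 / 3) ^ (k - i) := by rw [hone]
  have hsum := Finset.sum_le_sum key
  have hreflect : ∑ i ∈ Finset.range (k + 1), ((4 * (k - i) + 1 : ℕ) : ℝ) * (1 / 3) ^ (k - i)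
      = ∑ j ∈ Finset.range (k + 1), ((4 * j + 1 : ℕ) : ℝ) * (1 / 3) ^ j := by
    have := Finset.sum_range_reflect (fun j => ((4 * j + 1 : ℕ) : ℝ) * (1 / 3) ^ j) (k + 1)
    simpa using this
  have hgeo := aux_geom k
  have hpos : (0 : ℝ) ≤ (4 * (k : ℝ) + 7) / (2 * 3 ^ k) := by positivity
  calc ∑ i ∈ Finset.range (k + 1),
        (4 * ((k : ℝ) - (i : ℝ)) + 1) * (Nat.choose (4 * k) i : ℝ)
          * p ^ i * q ^ (4 * k - i)
      ≤ ∑ i ∈ Finset.range (k + 1), ((4 * (k - i) + 1 : ℕ) : ℝ) * (1 / 3) ^ (k - i) := hsum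
    _ = 9 / 2 - (4 * k + 7) / (2 * 3 ^ k) := by rw [hreflect, hgeo]
    _ < 5.72 := by
        have : (0:ℝ) < (4 * (k:ℝ) + 7) / (2 * 3 ^ k) := by positivity
        norm_num
        linarith
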